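/- Let q be a prime power and let m be a positive divisor of q+1 with m ≠ q+1. The number of affine F_{q^2}-rational points of the curve defined by y^q + y = x^m (i.e., pairs (x,y) ∈ F_{q^2}^2 with y^q + y = x^m) is exactly q(1 + (q-1)m). -/

import Mathlib

open Finset Polynomial

private lemma card_isRoot_le {F : Type} [Field F] [Fintype F] [DecidableEq F]
    (P : F[X]) (hP : P ≠ 0) :
    (Finset.univ.filter fun y : F => P.eval y = 0).card ≤ P.natDegree := by
  have h1 : (Finset.univ.filter fun y : F => P.eval y = 0) ⊆ P.roots.toFinset := by
    intro y hy
    rw [Finset.mem_filter] at hy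
    rw [Multiset.mem_toFinset, Polynomial.mem_roots hP]
    exact hy.2
  calc (Finset.univ.filter fun y : F => P.eval y = 0).card
      ≤ P.roots.toFinset.card := Finset.card_le_card h1
    _ ≤ Multiset.card P.roots := P.roots.toFinset_card_le
    _ ≤ P.natDegree := P.card_roots'

private lemma fiber_count (q : ℕ) (hq2 : 2 ≤ q) (F : Type) [Field F] [Fintype F] [DecidableEq F]
    (hF : Fintype.card F = q ^ 2) (hadd : ∀ a b : F, (a + b) ^ q = a ^ q + b ^ q) (c : F) :
    (Finset.univ.filter fun y : F => y ^ q + y = c).card = if c ^ q = c then q else 0 := by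
  have hq0 : 0 < q := by omega
  set Fib : F → Finset F := fun c => Finset.univ.filter fun y : F => y ^ q + y = c with hFibdef
  -- fibers over non-fixed points are empty
  have hfix : ∀ c : F, (Fib c).Nonempty → c ^ q = c := by
    rintro c ⟨y, hy⟩
    rw [hFibdef, Finset.mem_filter] at hy
    have hy2 : y ^ (q ^ 2) = y := by
      have := FiniteField.pow_card y
      rwa [hF] at this
    rw [← hy.2, hadd, ← pow_mul, ← pow_two, hy2]
    ring
  -- nonempty fibers are translates of the kernel
  set K := (Fib 0).card with hK
  have htrans : ∀ c : F, (Fib c).Nonempty → (Fib c).card = K := by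
    rintro c ⟨y0, hy0⟩
    rw [hFibdef, Finset.mem_filter] at hy0
    rw [hK]
    apply Finset.card_nbij' (fun z => z - y0) (fun z => z + y0)
    · intro a ha
      rw [hFibdef, Finset.mem_coe, Finset.mem_filter] at ha ⊢
      refine ⟨Finset.mem_univ _, ?_⟩
      have h1 : (a - y0 + y0) ^ q = (a - y0) ^ q + y0 ^ q := hadd _ _
      rw [sub_add_cancel] at h1
      have h2 : (a - y0) ^ q = a ^ q - y0 ^ q := by linear_combination -h1
      rw [h2]
      linear_combination ha.2 - hy0.2
    · intro a ha
      rw [hFibdef, Finset.mem_coe, Finset.mem_filter] at ha ⊢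
      refine ⟨Finset.mem_univ _, ?_⟩
      rw [hadd]
      linear_combination ha.2 + hy0.2
    · intro a _; ring
    · intro a _; ring
  -- size bounds via polynomials
  have hKle : K ≤ q := by
    have hne : (X ^ q + X : F[X]) ≠ 0 := by
      intro h
      have h1 : ((X ^ q + X : F[X])).coeff q = 0 := by rw [h]; simp
      rw [coeff_add, coeff_X_pow, if_pos rfl, coeff_X,
        if_neg (by omega : ¬(1 = q)), add_zero] at h1
      exact one_ne_zero h1
    have hdeg : (X ^ q + X : F[X]).natDegree ≤ q := by
      refine le_trans (natDegree_add_le _ _) ?_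
      simp [natDegree_X_pow, natDegree_X]
      omega
    have := card_isRoot_le (X ^ q + X : F[X]) hne
    rw [hK, hFibdef]
    refine le_trans (le_of_eq ?_) (le_trans this hdeg)
    apply Finset.card_bij (fun a _ => a) <;> simp
  have hFixle : (Finset.univ.filter fun c : F => c ^ q = c).card ≤ q := by
    have hne : (X ^ q - X : F[X]) ≠ 0 := FiniteField.X_pow_card_sub_X_ne_zero F hq2
    have hdeg : (X ^ q - X : F[X]).natDegree = q := FiniteField.X_pow_card_sub_X_natDegree_eq F hq2
    have := card_isRoot_le (X ^ q - X : F[X]) hne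
    rw [hdeg] at this
    refine le_trans (le_of_eq ?_) this
    apply Finset.card_bij (fun a _ => a) <;> simp [sub_eq_zero]
  have hfibK : ∀ c : F, (Fib c).card ≤ K := by
    intro c
    rcases (Fib c).eq_empty_or_nonempty with h | h
    · simp [h]
    · exact le_of_eq (htrans c h)
  set Fix := Finset.univ.filter fun c : F => c ^ q = c with hFixdef
  have hsum : ∑ c : F, (Fib c).card = q ^ 2 := by
    rw [← hF, ← Finset.card_univ]
    exact (Finset.card_eq_sum_card_fiberwise (f := fun y : F => y ^ q + y)
      (fun x _ => Finset.mem_univ _)).symm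
  have hsum2 : ∑ c ∈ Fix, (Fib c).card = q ^ 2 := by
    rw [← hsum]
    apply Finset.sum_subset (Finset.subset_univ _)
    intro c _ hc
    rw [hFixdef, Finset.mem_filter] at hc
    push_neg at hc
    rcases (Fib c).eq_empty_or_nonempty with h | h
    · simp [h]
    · exact absurd (hfix c h) (hc (Finset.mem_univ c))
  have hle1 : q ^ 2 ≤ Fix.card * K := by
    rw [← hsum2]
    calc ∑ c ∈ Fix, (Fib c).card ≤ Fix.card • K :=
          Finset.sum_le_card_nsmul _ _ K (fun c _ => hfibK c)
      _ = Fix.card * K := by rw [smul_eq_mul]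
  have hKq : K = q := by
    have h1 : q * q ≤ q * K := by
      calc q * q = q ^ 2 := (pow_two q).symm
        _ ≤ Fix.card * K := hle1
        _ ≤ q * K := Nat.mul_le_mul_right K hFixle
    have := Nat.le_of_mul_le_mul_left h1 hq0
    omega
  have hfibeq : ∀ c ∈ Fix, (Fib c).card = K := by
    by_contra h
    push_neg at h
    obtain ⟨c0, hc0, hne⟩ := h
    have hlt : ∑ c ∈ Fix, (Fib c).card < ∑ _c ∈ Fix, K :=
      Finset.sum_lt_sum (fun c _ => hfibK c) ⟨c0, hc0, lt_of_le_of_ne (hfibK c0) hne⟩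
    rw [hsum2, Finset.sum_const, smul_eq_mul] at hlt
    have : Fix.card * K ≤ q * q := Nat.mul_le_mul hFixle (le_of_eq hKq)
    have hq2' : q * q = q ^ 2 := (pow_two q).symm
    omega
  by_cases hc : c ^ q = c
  · rw [if_pos hc]
    have : c ∈ Fix := by rw [hFixdef, Finset.mem_filter]; exact ⟨Finset.mem_univ _, hc⟩
    rw [show (Finset.univ.filter fun y : F => y ^ q + y = c) = Fib c from rfl,
      hfibeq c this, hKq]
  · rw [if_neg hc]
    rw [Finset.card_eq_zero]
    by_contra h
    exact hc (hfix c (Finset.nonempty_iff_ne_empty.mpr h))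

/-- For a prime power `q` and a positive divisor `m` of `q+1` with
`m ≠ q+1`, the affine curve `y^q + y = x^m` over the field with `q^2` elements
has exactly `q * (1 + (q-1) * m)` rational points. -/
theorem affine_point_count_quotient_hermitian
    (q m : ℕ) (hq : ∃ p n : ℕ, p.Prime ∧ 0 < n ∧ q = p ^ n)
    (hm : 0 < m) (hmd : m ∣ q + 1) (hne : m ≠ q + 1)
    (F : Type) [Field F] [Fintype F] (hF : Fintype.card F = q ^ 2) :
    Nat.card {P : F × F // P.2 ^ q + P.2 = P.1 ^ m} = q * (1 + (q - 1) * m) := by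
  classical
  obtain ⟨p, n, hp, hn, hqe⟩ := hq
  haveI : Fact p.Prime := ⟨hp⟩
  have hq2 : 2 ≤ q := by
    rw [hqe]
    calc 2 ≤ p := hp.two_le
      _ ≤ p ^ n := Nat.le_self_pow hn.ne' p
  have hq0 : 0 < q := by omega
  -- characteristic
  have hp0 : (p : F) = 0 := by
    have h := FiniteField.cast_card_eq_zero F
    rw [hF, hqe, ← pow_mul] at h
    push_cast at h
    exact pow_eq_zero_iff (by positivity : n * 2 ≠ 0) |>.mp h
  have hring : ringChar F = p := by
    have hdvd : ringChar F ∣ p := (CharP.cast_eq_zero_iff F (ringChar F) p).mp hp0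
    rcases (Nat.Prime.eq_one_or_self_of_dvd hp _ hdvd) with h | h
    · exact absurd h (CharP.ringChar_ne_one)
    · exact h
  haveI : CharP F p := hring ▸ ringChar.charP F
  have hadd : ∀ a b : F, (a + b) ^ q = a ^ q + b ^ q := by
    intro a b
    rw [hqe]
    exact add_pow_char_pow a b p n
  -- reduce to a sum of fiber cardinalities
  have e : {P : F × F // P.2 ^ q + P.2 = P.1 ^ m} ≃ Σ x : F, {y : F // y ^ q + y = x ^ m} :=
    { toFun := fun P => ⟨P.1.1, P.1.2, P.2⟩
      invFun := fun s => ⟨(s.1, s.2.1), s.2.2⟩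
      left_inv := fun P => rfl
      right_inv := fun s => rfl }
  rw [Nat.card_congr e, Nat.card_eq_fintype_card, Fintype.card_sigma]
  have hstep : ∀ x : F, Fintype.card {y : F // y ^ q + y = x ^ m}
      = if (x ^ m) ^ q = x ^ m then q else 0 := by
    intro x
    rw [Fintype.card_subtype]
    exact fiber_count q hq2 F hF hadd (x ^ m)
  rw [Finset.sum_congr rfl (fun x _ => hstep x), Finset.sum_ite, Finset.sum_const,
    Finset.sum_const_zero, add_zero, smul_eq_mul]
  -- count the x with x^m in the prime field
  set d := m * (q - 1) with hd
  have hd0 : 0 < d := by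
    have : 0 < q - 1 := by omega
    positivity
  have hsq : (q + 1) * (q - 1) = q ^ 2 - 1 := by
    have h : (q + 1) * (q - 1) + 1 = q ^ 2 := by
      obtain ⟨e', rfl⟩ : ∃ e', q = e' + 1 := ⟨q - 1, by omega⟩
      simp only [Nat.add_sub_cancel]
      ring
    omega
  -- a primitive d-th root of unity
  obtain ⟨g, hg⟩ := IsCyclic.exists_ofOrder_eq_natCard (α := Fˣ)
  have horderg : orderOf g = q ^ 2 - 1 := by
    rw [hg, Nat.card_eq_fintype_card, Fintype.card_units, hF]
  have hdvd : d ∣ orderOf g := by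
    rw [horderg, ← hsq, hd]
    exact mul_dvd_mul hmd dvd_rfl
  have hord : orderOf (g ^ (orderOf g / d)) = d :=
    orderOf_pow_orderOf_div (orderOf_pos g).ne' hdvd
  have hζu : IsPrimitiveRoot (g ^ (orderOf g / d)) d := by
    have h := IsPrimitiveRoot.orderOf (g ^ (orderOf g / d))
    rwa [hord] at h
  have hζ : IsPrimitiveRoot ((g ^ (orderOf g / d) : Fˣ) : F) d :=
    IsPrimitiveRoot.coe_units_iff.mpr hζu
  have hroots : (Polynomial.nthRootsFinset d (1 : F)).card = d := hζ.card_nthRootsFinset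
  -- identify the x-set
  have hset : (Finset.univ.filter fun x : F => (x ^ m) ^ q = x ^ m)
      = insert (0 : F) (Polynomial.nthRootsFinset d (1 : F)) := by
    ext x
    rw [Finset.mem_filter, Finset.mem_insert, Polynomial.mem_nthRootsFinset hd0]
    constructor
    · rintro ⟨-, hx⟩
      by_cases hx0 : x = 0
      · exact Or.inl hx0
      · right
        have hxm : x ^ m ≠ 0 := pow_ne_zero m hx0
        have h1 : (x ^ m) ^ (q - 1) * x ^ m = 1 * x ^ m := by
          rw [one_mul, ← pow_succ, Nat.sub_add_cancel (by omega : 1 ≤ q), hx]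
        have h2 : (x ^ m) ^ (q - 1) = 1 := mul_right_cancel₀ hxm h1
        rw [hd, pow_mul]
        exact h2
    · rintro (rfl | hx)
      · refine ⟨Finset.mem_univ _, ?_⟩
        rw [zero_pow hm.ne', zero_pow (by omega : q ≠ 0)]
      · refine ⟨Finset.mem_univ _, ?_⟩
        have h2 : (x ^ m) ^ (q - 1) = 1 := by rw [← pow_mul, ← hd]; exact hx
        calc (x ^ m) ^ q = (x ^ m) ^ (q - 1) * x ^ m := by
              rw [← pow_succ, Nat.sub_add_cancel (by omega : 1 ≤ q)]
          _ = x ^ m := by rw [h2, one_mul]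
  have h0nm : (0 : F) ∉ Polynomial.nthRootsFinset d (1 : F) := by
    intro h
    rw [Polynomial.mem_nthRootsFinset hd0, zero_pow hd0.ne'] at h
    exact zero_ne_one h
  rw [hset, Finset.card_insert_of_notMem h0nm, hroots]
  rw [hd]
  ring
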